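/- Let E be a finite-dimensional real inner product space, C₁, C₂ ∈ ℝ, and let u, v : E → ℝ be respectively C₁-semiconcave and C₂-semiconcave. If x₀ ∈ E is a local minimum point of u + v, then both u and v are differentiable at x₀ and the (Fréchet) derivatives satisfy Du(x₀) + Dv(x₀) = 0. In particular (taking v = 0), a semiconcave function is differentiable with derivative 0 at every local minimum point. -/

import Mathlib

set_option maxHeartbeats 1000000

open Filter Asymptotics
open scoped Topology RealInnerProductSpace

/-- Supergradient existence for a concave function on a f.d. space. -/
lemma exists_supergradient {E : Type*} [NormedAddCommGroup E] [NormedSpace ℝ E]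
    [FiniteDimensional ℝ E] {φ : E → ℝ} (hφ : ConcaveOn ℝ Set.univ φ) (x₀ : E) :
    ∃ L : E →L[ℝ] ℝ, ∀ x, φ x ≤ φ x₀ + (L x - L x₀) := by
  have hcont : Continuous φ := by
    rw [← continuousOn_univ]
    exact hφ.continuousOn isOpen_univ
  set s : Set (E × ℝ) := {p : E × ℝ | p.2 < φ p.1} with hs
  have hconv : Convex ℝ s := by
    have := hφ.convex_strict_hypograph
    simpa using this
  have hopen : IsOpen s := by
    have : s = {p : E × ℝ | p.2 - φ p.1 < 0} := by ext p; simp [hs, sub_neg]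
    rw [this]
    exact isOpen_lt (continuous_snd.sub (hcont.comp continuous_fst)) continuous_const
  have hx : (x₀, φ x₀) ∉ s := by simp [hs]
  obtain ⟨f, hf⟩ := geometric_hahn_banach_open_point hconv hopen hx
  set g : E →L[ℝ] ℝ := f.comp (ContinuousLinearMap.inl ℝ E ℝ) with hg
  set c : ℝ := f (0, 1) with hc
  have hdecomp : ∀ x : E, ∀ y : ℝ, f (x, y) = g x + y * c := by
    intro x y
    have : (x, y) = (x, (0:ℝ)) + y • ((0:E), (1:ℝ)) := by
      simp [Prod.ext_iff]
    rw [this, map_add, map_smul]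
    simp [hg, hc, ContinuousLinearMap.inl_apply, smul_eq_mul, mul_comm]
  have key : ∀ x : E, ∀ y : ℝ, y < φ x → g x + y * c < g x₀ + φ x₀ * c := by
    intro x y hy
    have := hf (x, y) hy
    rwa [hdecomp, hdecomp] at this
  have hcpos : 0 < c := by
    have := key x₀ (φ x₀ - 1) (by linarith)
    nlinarith
  refine ⟨-(c⁻¹) • g, fun x => ?_⟩
  have hle : φ x * c ≤ g x₀ - g x + φ x₀ * c := by
    by_contra hlt
    push_neg at hlt
    set ε : ℝ := (φ x * c - (g x₀ - g x + φ x₀ * c)) / (2 * c) with hε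
    have hεpos : 0 < ε := div_pos (by linarith) (by linarith)
    have := key x (φ x - ε) (by linarith)
    have hεc : ε * c = (φ x * c - (g x₀ - g x + φ x₀ * c)) / 2 := by
      rw [hε, div_mul_eq_mul_div, mul_div_mul_right _ _ hcpos.ne']
    nlinarith
  have : (-(c⁻¹) • g) x - (-(c⁻¹) • g) x₀ = (g x₀ - g x) / c := by
    simp [ContinuousLinearMap.smul_apply, smul_eq_mul]
    field_simp
    ring
  rw [this]
  have h2 : φ x ≤ (g x₀ - g x + φ x₀ * c) / c := (le_div_iff₀ hcpos).mpr hle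
  have h3 : (g x₀ - g x + φ x₀ * c) / c = φ x₀ + (g x₀ - g x) / c := by
    field_simp; ring
  linarith [h2, h3.le, h3.ge]

lemma isLittleO_of_quadratic {E : Type*} [NormedAddCommGroup E]
    {f : E → ℝ} (K : ℝ) (hb : ∀ᶠ h in 𝓝 (0:E), |f h| ≤ K * ‖h‖ ^ 2) :
    f =o[𝓝 (0:E)] fun h => h := by
  have h1 : f =O[𝓝 (0:E)] fun h => ‖h‖ ^ 2 := by
    refine IsBigO.of_bound |K| ?_
    filter_upwards [hb] with h hh
    have : K * ‖h‖ ^ 2 ≤ |K| * ‖h‖ ^ 2 := by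
      have := le_abs_self K
      nlinarith [sq_nonneg ‖h‖]
    calc ‖f h‖ = |f h| := rfl
      _ ≤ |K| * ‖h‖ ^ 2 := le_trans hh this
      _ = |K| * ‖(‖h‖ ^ 2)‖ := by rw [Real.norm_of_nonneg (by positivity)]
  have h2 : (fun h : E => ‖h‖ ^ 2) =o[𝓝 (0:E)] fun h => h := by
    rw [isLittleO_iff]
    intro c hc
    have : ∀ᶠ h : E in 𝓝 0, ‖h‖ < c := by
      have : Metric.ball (0:E) c ∈ 𝓝 (0:E) := Metric.ball_mem_nhds _ hc
      filter_upwards [this] with h hh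
      simpa [dist_eq_norm] using hh
    filter_upwards [this] with h hh
    have h0 : (0:ℝ) ≤ ‖h‖ := norm_nonneg _
    calc ‖(‖h‖ ^ 2)‖ = ‖h‖ * ‖h‖ := by
          rw [Real.norm_of_nonneg (by positivity)]; ring
      _ ≤ c * ‖h‖ := by nlinarith
  exact h1.trans_isLittleO h2



/-- A function `u : E → ℝ` is `C`-semiconcave if `x ↦ u x − (C/2)‖x‖²` is concave. -/
def Semiconcave {E : Type*} [NormedAddCommGroup E] [InnerProductSpace ℝ E]
    (C : ℝ) (u : E → ℝ) : Prop :=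
  ConcaveOn ℝ Set.univ (fun x => u x - (C / 2) * ‖x‖ ^ 2)

lemma semiconcave_main {E : Type*} [NormedAddCommGroup E] [InnerProductSpace ℝ E]
    [FiniteDimensional ℝ E]
    (C₁ C₂ : ℝ) (u v : E → ℝ)
    (hu : Semiconcave C₁ u) (hv : Semiconcave C₂ v)
    (x₀ : E) (hmin : IsLocalMin (fun x => u x + v x) x₀) :
    ∃ ℓ : E →L[ℝ] ℝ, HasFDerivAt u ℓ x₀ ∧ HasFDerivAt v (-ℓ) x₀ := by
  obtain ⟨L₁, hL₁⟩ := exists_supergradient (hu : ConcaveOn ℝ Set.univ _) x₀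
  obtain ⟨L₂, hL₂⟩ := exists_supergradient (hv : ConcaveOn ℝ Set.univ _) x₀
  set ℓ₁ : E →L[ℝ] ℝ := L₁ + C₁ • (innerSL ℝ x₀) with hℓ₁
  set ℓ₂ : E →L[ℝ] ℝ := L₂ + C₂ • (innerSL ℝ x₀) with hℓ₂
  have hub : ∀ h : E, u (x₀ + h) ≤ u x₀ + ℓ₁ h + (C₁ / 2) * ‖h‖ ^ 2 := by
    intro h
    have h1 := hL₁ (x₀ + h)
    have hn := norm_add_sq_real x₀ h
    have hmap : L₁ (x₀ + h) = L₁ x₀ + L₁ h := map_add _ _ _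
    have happ : ℓ₁ h = L₁ h + C₁ * (inner ℝ x₀ h : ℝ) := by
      simp [hℓ₁, ContinuousLinearMap.add_apply, ContinuousLinearMap.smul_apply, innerSL_apply_apply, smul_eq_mul]
    rw [hn, hmap] at h1
    rw [happ]; linarith
  have hvb : ∀ h : E, v (x₀ + h) ≤ v x₀ + ℓ₂ h + (C₂ / 2) * ‖h‖ ^ 2 := by
    intro h
    have h1 := hL₂ (x₀ + h)
    have hn := norm_add_sq_real x₀ h
    have hmap : L₂ (x₀ + h) = L₂ x₀ + L₂ h := map_add _ _ _
    have happ : ℓ₂ h = L₂ h + C₂ * (inner ℝ x₀ h : ℝ) := by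
      simp [hℓ₂, ContinuousLinearMap.add_apply, ContinuousLinearMap.smul_apply, innerSL_apply_apply, smul_eq_mul]
    rw [hn, hmap] at h1
    rw [happ]; linarith
  have ht0 : Filter.Tendsto (fun h : E => x₀ + h) (𝓝 0) (𝓝 x₀) := by
    simpa using (continuous_add_left x₀).tendsto (0 : E)
  have hmin' : ∀ᶠ h : E in 𝓝 0, u x₀ + v x₀ ≤ u (x₀ + h) + v (x₀ + h) :=
    ht0.eventually hmin
  -- the two linear parts cancel
  have hsum : ∀ y : E, ℓ₁ y + ℓ₂ y = 0 := by
    have hnn : ∀ y : E, 0 ≤ ℓ₁ y + ℓ₂ y := by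
      intro y
      have hts : Filter.Tendsto (fun t : ℝ => t • y) (𝓝[>] 0) (𝓝 (0 : E)) := by
        have : Filter.Tendsto (fun t : ℝ => t • y) (𝓝 0) (𝓝 ((0:ℝ) • y)) :=
          (continuous_id.smul continuous_const).tendsto 0
        simpa using this.mono_left nhdsWithin_le_nhds
      have key : ∀ᶠ t in 𝓝[>] (0:ℝ),
          0 ≤ (ℓ₁ y + ℓ₂ y) + ((C₁ + C₂) / 2 * ‖y‖ ^ 2) * t := by
        filter_upwards [hts.eventually hmin', self_mem_nhdsWithin] with t hmem ht
        have ht' : (0:ℝ) < t := ht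
        have h1 := hub (t • y)
        have h2 := hvb (t • y)
        have hs1 : ℓ₁ (t • y) = t * ℓ₁ y := by
          rw [map_smul]; simp [smul_eq_mul]
        have hs2 : ℓ₂ (t • y) = t * ℓ₂ y := by
          rw [map_smul]; simp [smul_eq_mul]
        have hns : ‖t • y‖ ^ 2 = t ^ 2 * ‖y‖ ^ 2 := by
          rw [norm_smul]; rw [Real.norm_eq_abs]; rw [mul_pow, sq_abs]
        rw [hs1, hns] at h1
        rw [hs2, hns] at h2
        have hmul : 0 ≤ t * ((ℓ₁ y + ℓ₂ y) + ((C₁ + C₂) / 2 * ‖y‖ ^ 2) * t) := by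
          nlinarith [hmem, h1, h2]
        exact nonneg_of_mul_nonneg_right hmul ht'
      have htt : Filter.Tendsto
          (fun t : ℝ => (ℓ₁ y + ℓ₂ y) + ((C₁ + C₂) / 2 * ‖y‖ ^ 2) * t)
          (𝓝[>] 0) (𝓝 (ℓ₁ y + ℓ₂ y)) := by
        have : Filter.Tendsto
            (fun t : ℝ => (ℓ₁ y + ℓ₂ y) + ((C₁ + C₂) / 2 * ‖y‖ ^ 2) * t)
            (𝓝 0) (𝓝 ((ℓ₁ y + ℓ₂ y) + ((C₁ + C₂) / 2 * ‖y‖ ^ 2) * 0)) := by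
          exact (continuous_const.add (continuous_const.mul continuous_id)).tendsto 0
        simpa using this.mono_left nhdsWithin_le_nhds
      exact ge_of_tendsto htt key
    intro y
    have h1 := hnn y
    have h2 := hnn (-y)
    rw [map_neg, map_neg] at h2
    linarith
  have hneg : ∀ y : E, ℓ₂ y = -ℓ₁ y := fun y => by have := hsum y; linarith
  have hdu : HasFDerivAt u ℓ₁ x₀ := by
    rw [hasFDerivAt_iff_isLittleO_nhds_zero]
    apply isLittleO_of_quadratic (|C₁| / 2 + |C₂| / 2 + 1)
    filter_upwards [hmin'] with h hh
    have h1 := hub h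
    have h2 := hvb h
    have h3 := hneg h
    have h4 : (0:ℝ) ≤ ‖h‖ ^ 2 := by positivity
    have hm1 : C₁ * ‖h‖ ^ 2 ≤ |C₁| * ‖h‖ ^ 2 :=
      mul_le_mul_of_nonneg_right (le_abs_self _) h4
    have hm2 : C₂ * ‖h‖ ^ 2 ≤ |C₂| * ‖h‖ ^ 2 :=
      mul_le_mul_of_nonneg_right (le_abs_self _) h4
    have hm3 : -(|C₁| * ‖h‖ ^ 2) ≤ C₁ * ‖h‖ ^ 2 := by
      have := mul_le_mul_of_nonneg_right (neg_abs_le C₁) h4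
      linarith
    have hm4 : -(|C₂| * ‖h‖ ^ 2) ≤ C₂ * ‖h‖ ^ 2 := by
      have := mul_le_mul_of_nonneg_right (neg_abs_le C₂) h4
      linarith
    rw [abs_le]
    constructor <;> linarith
  have hdv : HasFDerivAt v ℓ₂ x₀ := by
    rw [hasFDerivAt_iff_isLittleO_nhds_zero]
    apply isLittleO_of_quadratic (|C₁| / 2 + |C₂| / 2 + 1)
    filter_upwards [hmin'] with h hh
    have h1 := hub h
    have h2 := hvb h
    have h3 := hneg h
    have h4 : (0:ℝ) ≤ ‖h‖ ^ 2 := by positivity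
    have hm1 : C₁ * ‖h‖ ^ 2 ≤ |C₁| * ‖h‖ ^ 2 :=
      mul_le_mul_of_nonneg_right (le_abs_self _) h4
    have hm2 : C₂ * ‖h‖ ^ 2 ≤ |C₂| * ‖h‖ ^ 2 :=
      mul_le_mul_of_nonneg_right (le_abs_self _) h4
    have hm3 : -(|C₁| * ‖h‖ ^ 2) ≤ C₁ * ‖h‖ ^ 2 := by
      have := mul_le_mul_of_nonneg_right (neg_abs_le C₁) h4
      linarith
    have hm4 : -(|C₂| * ‖h‖ ^ 2) ≤ C₂ * ‖h‖ ^ 2 := by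
      have := mul_le_mul_of_nonneg_right (neg_abs_le C₂) h4
      linarith
    rw [abs_le]
    constructor <;> linarith
  refine ⟨ℓ₁, hdu, ?_⟩
  have : ℓ₂ = -ℓ₁ := by ext y; simpa using hneg y
  rwa [this] at hdv

theorem semiconcave_localMin_differentiable
    {E : Type*} [NormedAddCommGroup E] [InnerProductSpace ℝ E] [FiniteDimensional ℝ E]
    (C₁ C₂ : ℝ) (u v : E → ℝ)
    (hu : Semiconcave C₁ u) (hv : Semiconcave C₂ v)
    (x₀ : E) (hmin : IsLocalMin (fun x => u x + v x) x₀) :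
    (DifferentiableAt ℝ u x₀ ∧ DifferentiableAt ℝ v x₀ ∧
      fderiv ℝ u x₀ + fderiv ℝ v x₀ = 0) ∧
    -- In particular (taking `v = 0`), a semiconcave function is differentiable with
    -- derivative `0` at every local minimum point.
    (∀ (C : ℝ) (w : E → ℝ), Semiconcave C w → ∀ x : E, IsLocalMin w x →
      DifferentiableAt ℝ w x ∧ fderiv ℝ w x = 0) := by
  constructor
  · obtain ⟨ℓ, h1, h2⟩ := semiconcave_main C₁ C₂ u v hu hv x₀ hmin
    refine ⟨h1.differentiableAt, h2.differentiableAt, ?_⟩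
    rw [h1.fderiv, h2.fderiv]
    simp
  · intro C w hw x hx
    have hz : Semiconcave 0 (fun _ : E => (0:ℝ)) := by
      unfold Semiconcave
      simp only [zero_div, zero_mul, sub_zero]
      exact concaveOn_const _ convex_univ
    have hx' : IsLocalMin (fun y => w y + (fun _ : E => (0:ℝ)) y) x := by simpa using hx
    obtain ⟨ℓ, h1, h2⟩ := semiconcave_main C 0 w (fun _ => 0) hw hz x hx'
    have hzero : -ℓ = 0 := h2.unique (hasFDerivAt_const 0 x)
    have hℓ0 : ℓ = 0 := by
      have := hzero
      rwa [neg_eq_zero] at this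
    exact ⟨h1.differentiableAt, by rw [h1.fderiv, hℓ0]⟩
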